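/- Let τ and σ be faithful diffuse probability Radon measures on [0,1], let n ≥ 1, let ε > 0, and let D ⊆ ℕ be an infinite set of positive integers closed under taking divisors and under lcm with n ∈ D. Then there exist k ≥ 1 with nk ∈ D and continuous maps ξ₁, …, ξ_k : [0,1] → [0,1], each having image of diameter less than ε, such that (1/k)·Σᵢ (ξᵢ)_*σ = τ; consequently f ↦ diag(f∘ξ₁, …, f∘ξ_k) is an injective unital *-homomorphism A_n → A_{nk} carrying the trace induced by σ back to the trace induced by τ. -/

import Mathlib

open MeasureTheory
open scoped ENNReal

noncomputable section

/-- The unit interval `[0,1]` as a type. -/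
abbrev 𝕀 : Type := unitInterval

/-- A measure on `[0,1]` is *faithful* if it assigns positive measure to every
nonempty (relatively) open subset. -/
def Faithful (μ : Measure 𝕀) : Prop :=
  ∀ U : Set 𝕀, IsOpen U → U.Nonempty → 0 < μ U

/-- A measure on `[0,1]` is *diffuse* (atomless) if every singleton has measure zero. -/
def Diffuse (μ : Measure 𝕀) : Prop :=
  ∀ t : 𝕀, μ {t} = 0

open scoped Matrix.Norms.L2Operator ComplexOrder

/-- `n × n` complex matrices. -/
abbrev Mat (n : ℕ) : Type := Matrix (Fin n) (Fin n) ℂ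

/-- The C*-algebra `𝔸 n = C([0,1], Mₙ(ℂ))` of continuous matrix-valued functions. -/
abbrev 𝔸 (n : ℕ) : Type := C(𝕀, Mat n)

/-- The tracial state on `𝔸 n` induced by the measure `μ` on `[0,1]`:
`f ↦ ∫ tr(f t) dμ(t)`, where `tr` is the normalized trace on `Mₙ(ℂ)`. -/
def trInt (n : ℕ) (μ : Measure 𝕀) (f : 𝔸 n) : ℂ :=
  ∫ t, (f t).trace / (n : ℂ) ∂μ

/-- Block diagonal (with `k` blocks of size `n`) as a linear map, reindexed to `Fin m`
where `m = n * k`. -/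
def diagL (n k m : ℕ) (h : n * k = m) : (Fin k → Mat n) →ₗ[ℂ] Mat m where
  toFun g := (Matrix.blockDiagonal g).submatrix
      (fun a => finProdFinEquiv.symm (Fin.cast h.symm a))
      (fun a => finProdFinEquiv.symm (Fin.cast h.symm a))
  map_add' g₁ g₂ := by
    simp [Matrix.blockDiagonal_add, Matrix.submatrix_add]
  map_smul' c g := by
    simp [Matrix.blockDiagonal_smul, Matrix.submatrix_smul]

/-- `diag n k m h ξ f` is the element of `𝔸 m` whose value at `t` is the block-diagonal
matrix with diagonal blocks `f (ξ 0 t), …, f (ξ (k-1) t)`. -/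
def diag (n k m : ℕ) (h : n * k = m) (ξ : Fin k → C(𝕀, 𝕀)) (f : 𝔸 n) : 𝔸 m where
  toFun t := diagL n k m h (fun j => f (ξ j t))
  continuous_toFun := (diagL n k m h).continuous_of_finiteDimensional.comp
      (continuous_pi fun j => f.continuous.comp (ξ j).continuous)


namespace St6
open Set Filter Topology Function

variable {μ : Measure 𝕀} [IsProbabilityMeasure μ]

lemma Iic_zero : Set.Iic (0 : 𝕀) = {(0 : 𝕀)} := by
  ext t
  simp only [mem_Iic, mem_singleton_iff]
  exact ⟨fun h => le_antisymm h (unitInterval.nonneg' ), fun h => h.le⟩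

lemma Iic_one : Set.Iic (1 : 𝕀) = (univ : Set 𝕀) :=
  eq_univ_of_forall fun t => unitInterval.le_one'

/-- The cumulative distribution function of `μ`, real valued. -/
def Fr (μ : Measure 𝕀) (t : 𝕀) : ℝ := (μ (Iic t)).toReal

lemma Fr_mono : Monotone (Fr μ) := fun _ _ h =>
  ENNReal.toReal_mono (measure_ne_top _ _) (measure_mono (Iic_subset_Iic.2 h))

lemma Fr_nonneg (t : 𝕀) : 0 ≤ Fr μ t := ENNReal.toReal_nonneg

lemma measure_Iic_eq (t : 𝕀) : μ (Iic t) = ENNReal.ofReal (Fr μ t) :=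
  (ENNReal.ofReal_toReal (measure_ne_top μ _)).symm


lemma Fr_le_one (t : 𝕀) : Fr μ t ≤ 1 := by
  have : μ (Iic t) ≤ 1 := prob_le_one
  simpa [Fr] using ENNReal.toReal_mono ENNReal.one_ne_top this

lemma Fr_zero (hd : Diffuse μ) : Fr μ 0 = 0 := by
  simp [Fr, Iic_zero, hd 0]

lemma Fr_one : Fr μ 1 = 1 := by
  simp [Fr, Iic_one]

lemma measure_Iio_eq (hd : Diffuse μ) (x : 𝕀) : μ (Iio x) = μ (Iic x) := by
  refine le_antisymm (measure_mono Iio_subset_Iic_self) ?_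
  calc μ (Iic x) ≤ μ (Iio x ∪ {x}) := measure_mono (by
        intro s hs
        rcases lt_or_eq_of_le (mem_Iic.1 hs) with h | h
        · exact Or.inl h
        · exact Or.inr (by simp [h]))
    _ ≤ μ (Iio x) + μ {x} := measure_union_le _ _
    _ = μ (Iio x) := by rw [hd x, add_zero]

lemma Fr_strictMono (hf : Faithful μ) : StrictMono (Fr μ) := by
  intro s t hst
  obtain ⟨m, hm⟩ := exists_between hst
  have hpos : 0 < μ (Ioo s t) := hf _ isOpen_Ioo ⟨m, hm⟩
  have hsub : Iic s ∪ Ioo s t ⊆ Iic t := by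
    rintro u (hu | hu)
    · exact le_trans (mem_Iic.1 hu) hst.le
    · exact (mem_Ioo.1 hu).2.le
  have hdisj : Disjoint (Iic s) (Ioo s t) := by
    apply Set.disjoint_left.2
    intro u hu hu'
    exact absurd (mem_Iic.1 hu) (not_le.2 (mem_Ioo.1 hu').1)
  have hle : μ (Iic s) + μ (Ioo s t) ≤ μ (Iic t) := by
    rw [← measure_union hdisj measurableSet_Ioo]
    exact measure_mono hsub
  have h1 : μ (Iic s) < μ (Iic t) :=
    lt_of_lt_of_le (ENNReal.lt_add_right (measure_ne_top μ _) hpos.ne') hle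
  exact ENNReal.toReal_strict_mono (measure_ne_top μ _) h1

lemma Fr_leftLim (hd : Diffuse μ) (x : 𝕀) : Function.leftLim (Fr μ) x = Fr μ x := by
  rcases eq_or_ne (𝓝[<] x) ⊥ with h | h
  · exact leftLim_eq_of_eq_bot _ h
  have hx : (0 : 𝕀) < x := by
    rcases (unitInterval.nonneg' : (0:𝕀) ≤ x).lt_or_eq with h0 | h0
    · exact h0
    · exfalso
      apply h
      have : Iio x = (∅ : Set 𝕀) := by
        rw [← h0]
        exact eq_empty_of_forall_notMem fun t ht =>
          (not_le.2 ht) unitInterval.nonneg'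
      rw [this, nhdsWithin_empty]
  obtain ⟨u, hu, hmem, hlim⟩ := exists_seq_strictMono_tendsto' hx
  have hin : Tendsto u atTop (𝓝[<] x) :=
    tendsto_nhdsWithin_iff.2 ⟨hlim, Eventually.of_forall fun n => (hmem n).2⟩
  have h1 : Tendsto (fun n => Fr μ (u n)) atTop (𝓝 (Function.leftLim (Fr μ) x)) :=
    ((Fr_mono (μ := μ)).tendsto_leftLim x).comp hin
  have h2 : Tendsto (fun n => μ (Iic (u n))) atTop (𝓝 (μ (⋃ n, Iic (u n)))) :=
    tendsto_measure_iUnion_atTop fun a b hab => Iic_subset_Iic.2 (hu.monotone hab)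
  have hU : (⋃ n, Iic (u n)) = Iio x := by
    apply Subset.antisymm
    · exact iUnion_subset fun n s hs => lt_of_le_of_lt (mem_Iic.1 hs) (hmem n).2
    · intro s hs
      obtain ⟨n, hn⟩ := ((tendsto_order.1 hlim).1 s hs).exists
      exact mem_iUnion.2 ⟨n, hn.le⟩
  rw [hU, measure_Iio_eq hd] at h2
  have h3 : Tendsto (fun n => Fr μ (u n)) atTop (𝓝 (Fr μ x)) :=
    (ENNReal.tendsto_toReal (measure_ne_top μ _)).comp h2
  exact tendsto_nhds_unique h1 h3

lemma Fr_rightLim (x : 𝕀) : Function.rightLim (Fr μ) x = Fr μ x := by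
  rcases eq_or_ne (𝓝[>] x) ⊥ with h | h
  · exact rightLim_eq_of_eq_bot _ h
  have hx : x < 1 := by
    rcases (unitInterval.le_one' : x ≤ 1).lt_or_eq with h0 | h0
    · exact h0
    · exfalso
      apply h
      have : Ioi x = (∅ : Set 𝕀) := by
        rw [h0]
        exact eq_empty_of_forall_notMem fun t ht =>
          (not_le.2 ht) unitInterval.le_one'
      rw [this, nhdsWithin_empty]
  obtain ⟨u, hu, hmem, hlim⟩ := exists_seq_strictAnti_tendsto' hx
  have hin : Tendsto u atTop (𝓝[>] x) :=
    tendsto_nhdsWithin_iff.2 ⟨hlim, Eventually.of_forall fun n => (hmem n).1⟩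
  have h1 : Tendsto (fun n => Fr μ (u n)) atTop (𝓝 (Function.rightLim (Fr μ) x)) :=
    ((Fr_mono (μ := μ)).tendsto_rightLim x).comp hin
  have h2 : Tendsto (fun n => μ (Iic (u n))) atTop (𝓝 (μ (⋂ n, Iic (u n)))) :=
    tendsto_measure_iInter_atTop (fun n => measurableSet_Iic.nullMeasurableSet)
      (fun a b hab => Iic_subset_Iic.2 (hu.antitone hab)) ⟨0, measure_ne_top μ _⟩
  have hU : (⋂ n, Iic (u n)) = Iic x := by
    apply Subset.antisymm
    · intro s hs
      have : ∀ n, s ≤ u n := fun n => mem_Iic.1 (mem_iInter.1 hs n)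
      exact mem_Iic.2 (ge_of_tendsto hlim (Eventually.of_forall this))
    · intro s hs
      exact mem_iInter.2 fun n => mem_Iic.2 (le_trans (mem_Iic.1 hs) (hmem n).1.le)
  rw [hU] at h2
  have h3 : Tendsto (fun n => Fr μ (u n)) atTop (𝓝 (Fr μ x)) :=
    (ENNReal.tendsto_toReal (measure_ne_top μ _)).comp h2
  exact tendsto_nhds_unique h1 h3

lemma Fr_continuous (hd : Diffuse μ) : Continuous (Fr μ) := by
  rw [continuous_iff_continuousAt]
  intro x
  rw [(Fr_mono (μ := μ)).continuousAt_iff_leftLim_eq_rightLim]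
  rw [Fr_leftLim hd, Fr_rightLim]

/-- The cdf as a map `𝕀 → 𝕀`. -/
def Fc (μ : Measure 𝕀) [IsProbabilityMeasure μ] (t : 𝕀) : 𝕀 :=
  ⟨Fr μ t, Fr_nonneg t, Fr_le_one t⟩

lemma Fc_strictMono (hf : Faithful μ) : StrictMono (Fc μ) := fun s t h =>
  Subtype.mk_lt_mk.2 (Fr_strictMono hf h)

lemma Fc_continuous (hd : Diffuse μ) : Continuous (Fc μ) :=
  (Fr_continuous hd).subtype_mk _

lemma Fc_surjective (hd : Diffuse μ) : Function.Surjective (Fc μ) := by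
  intro y
  have hy : y.val ∈ Icc (Fr μ 0) (Fr μ 1) := by
    rw [Fr_zero hd, Fr_one]
    exact y.2
  obtain ⟨t, ht⟩ := intermediate_value_univ (0 : 𝕀) 1 (Fr_continuous hd) hy
  exact ⟨t, Subtype.ext ht⟩

lemma measure_Iic_eq' (t : 𝕀) : μ (Iic t) = ENNReal.ofReal ((Fc μ t) : ℝ) :=
  measure_Iic_eq t

/-- The packaged cdf data: `F` the cdf as a homeomorphism-like pair with inverse `G`. -/
lemma exists_cdf (hf : Faithful μ) (hd : Diffuse μ) :
    ∃ F G : 𝕀 → 𝕀, Continuous F ∧ Continuous G ∧ (∀ y, F (G y) = y) ∧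
      StrictMono F ∧ ∀ t, μ (Iic t) = ENNReal.ofReal ((F t : ℝ)) := by
  have hcont := Fc_continuous (μ := μ) hd
  let e : 𝕀 ≃ 𝕀 := Equiv.ofBijective (Fc μ) ⟨(Fc_strictMono hf).injective, Fc_surjective hd⟩
  have hce : Continuous ⇑e := hcont
  let H : 𝕀 ≃ₜ 𝕀 := hce.homeoOfEquivCompactToT2
  refine ⟨Fc μ, ⇑H.symm, hcont, H.symm.continuous, fun y => ?_, Fc_strictMono hf,
    fun t => measure_Iic_eq' t⟩
  exact H.apply_symm_apply y

end St6

namespace St6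
open Set Filter Topology Function

lemma sum_clamp (k : ℕ) (x : ℝ) (h0 : 0 ≤ x) (h1 : x ≤ k) :
    ∑ j ∈ Finset.range k, max 0 (min (x - j) 1) = x := by
  induction k with
  | zero =>
    have : x = 0 := le_antisymm (by exact_mod_cast h1) h0
    simp [this]
  | succ k ih =>
    rw [Finset.sum_range_succ]
    rcases le_or_gt x k with hx | hx
    · rw [ih hx]
      have hle : min (x - k) 1 ≤ 0 := le_trans (min_le_left _ _) (by linarith)
      rw [max_eq_left hle, add_zero]
    · have hterm : ∀ j ∈ Finset.range k, max 0 (min (x - j) 1) = 1 := by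
        intro j hj
        have hj' : (j : ℝ) + 1 ≤ k := by exact_mod_cast Nat.succ_le_of_lt (Finset.mem_range.1 hj)
        have h1' : 1 ≤ x - j := by linarith
        rw [min_eq_right h1', max_eq_right (by norm_num)]
      rw [Finset.sum_congr rfl hterm, Finset.sum_const, Finset.card_range, nsmul_eq_mul, mul_one]
      have hk1 : x ≤ (k : ℝ) + 1 := by push_cast at h1; linarith
      rw [min_eq_left (by linarith), max_eq_right (by linarith)]
      ring

lemma exists_big_k (D : Set ℕ) (hDinf : D.Infinite)
    (hDpos : ∀ d ∈ D, 0 < d)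
    (hDlcm : ∀ a ∈ D, ∀ b ∈ D, Nat.lcm a b ∈ D) {n : ℕ} (hn : 1 ≤ n) (hnD : n ∈ D)
    (M : ℕ) : ∃ k : ℕ, M < k ∧ n * k ∈ D := by
  obtain ⟨d, hdD, hd⟩ := hDinf.exists_gt (n * M)
  have hl : Nat.lcm n d ∈ D := hDlcm n hnD d hdD
  have hdpos : 0 < d := hDpos d hdD
  have hlpos : 0 < Nat.lcm n d := Nat.pos_of_ne_zero (Nat.lcm_ne_zero (by omega) (by omega))
  have hdvd : n ∣ Nat.lcm n d := Nat.dvd_lcm_left n d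
  obtain ⟨k, hk⟩ := hdvd
  refine ⟨k, ?_, by rw [← hk]; exact hl⟩
  have hdl : d ≤ Nat.lcm n d := Nat.le_of_dvd hlpos (Nat.dvd_lcm_right n d)
  have : n * M < n * k := by omega
  exact lt_of_mul_lt_mul_left this (Nat.zero_le n)

end St6

namespace St6
open Set Filter Topology Function

def xiAux (Fs : 𝕀 → 𝕀) (k : ℕ) (j : Fin k) (t : 𝕀) : ℝ := (((j : ℕ) : ℝ) + (Fs t : ℝ)) / k

lemma xiAux_mem (Fs : 𝕀 → 𝕀) (k : ℕ) (hk : 0 < k) (j : Fin k) (t : 𝕀) :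
    xiAux Fs k j t ∈ Set.Icc (0 : ℝ) 1 := by
  unfold xiAux
  constructor
  · exact div_nonneg (add_nonneg (Nat.cast_nonneg _) (Fs t).2.1) (Nat.cast_nonneg _)
  · rw [div_le_one (by exact_mod_cast hk)]
    have hj : ((j : ℕ) : ℝ) + 1 ≤ k := by exact_mod_cast j.is_lt
    have := (Fs t).2.2
    linarith

lemma xiAux_continuous (Fs : 𝕀 → 𝕀) (hFs : Continuous Fs) (k : ℕ) (j : Fin k) :
    Continuous (xiAux Fs k j) :=
  (continuous_const.add (continuous_subtype_val.comp hFs)).div_const _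

/-- The `j`-th map `t ↦ G ((j + Fs t)/k)`. -/
def xiMap (G Fs : 𝕀 → 𝕀) (hG : Continuous G) (hFs : Continuous Fs)
    (k : ℕ) (hk : 0 < k) (j : Fin k) : C(𝕀, 𝕀) :=
  ⟨fun t => G ⟨xiAux Fs k j t, xiAux_mem Fs k hk j t⟩,
    hG.comp (Continuous.subtype_mk (xiAux_continuous Fs hFs k j) _)⟩

lemma G_le_iff {F G : 𝕀 → 𝕀} (hGF : ∀ y, F (G y) = y) (hFmono : StrictMono F)
    (y a : 𝕀) : G y ≤ a ↔ (y : ℝ) ≤ ((F a : 𝕀) : ℝ) := by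
  rw [← hFmono.le_iff_le, hGF]
  exact Iff.rfl

lemma xi_preimage_Iic {F G Fs : 𝕀 → 𝕀} (hG : Continuous G) (hFs : Continuous Fs)
    (hGF : ∀ y, F (G y) = y) (hFmono : StrictMono F)
    (k : ℕ) (hk : 0 < k) (j : Fin k) (a : 𝕀) :
    (xiMap G Fs hG hFs k hk j) ⁻¹' (Iic a) =
      {t : 𝕀 | (Fs t : ℝ) ≤ (k : ℝ) * ((F a : 𝕀) : ℝ) - (j : ℕ)} := by
  ext t
  simp only [mem_preimage, mem_Iic, mem_setOf_eq, xiMap, ContinuousMap.coe_mk]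
  rw [G_le_iff hGF hFmono]
  show xiAux Fs k j t ≤ _ ↔ _
  unfold xiAux
  rw [div_le_iff₀ (by exact_mod_cast hk)]
  constructor <;> intro h <;> linarith

lemma measure_sublevel {σ : Measure 𝕀} [IsProbabilityMeasure σ] {Fs Gs : 𝕀 → 𝕀}
    (hFsGs : ∀ y, Fs (Gs y) = y) (hFsmono : StrictMono Fs)
    (hFsmeas : ∀ t, σ (Iic t) = ENNReal.ofReal ((Fs t : ℝ))) (c : ℝ) :
    σ {t : 𝕀 | (Fs t : ℝ) ≤ c} = ENNReal.ofReal (max 0 (min c 1)) := by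
  rcases le_or_gt 1 c with hc | hc
  · have : {t : 𝕀 | (Fs t : ℝ) ≤ c} = univ :=
      eq_univ_of_forall fun t => le_trans (Fs t).2.2 hc
    rw [this, measure_univ, min_eq_right hc, max_eq_right zero_le_one, ENNReal.ofReal_one]
  · rcases lt_or_ge c 0 with hc0 | hc0
    · have : {t : 𝕀 | (Fs t : ℝ) ≤ c} = ∅ :=
        eq_empty_of_forall_notMem fun t ht => absurd (le_trans (Fs t).2.1 ht) hc0.not_ge
      rw [this, measure_empty, min_eq_left hc.le, max_eq_left hc0.le, ENNReal.ofReal_zero]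
    · have hset : {t : 𝕀 | (Fs t : ℝ) ≤ c} = Iic (Gs ⟨c, hc0, hc.le⟩) := by
        ext t
        simp only [mem_setOf_eq, mem_Iic]
        rw [← hFsmono.le_iff_le, hFsGs]
        exact ⟨fun h => h, fun h => h⟩
      rw [hset, hFsmeas, hFsGs, min_eq_left hc.le, max_eq_right hc0]

end St6

namespace St6
open Set Filter Topology Function

lemma key_measure {τ σ : Measure 𝕀} [IsProbabilityMeasure τ] [IsProbabilityMeasure σ]
    {F G Fs Gs : 𝕀 → 𝕀} (hG : Continuous G) (hFs : Continuous Fs)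
    (hGF : ∀ y, F (G y) = y) (hFmono : StrictMono F)
    (hFmeas : ∀ t, τ (Iic t) = ENNReal.ofReal ((F t : ℝ)))
    (hFsGs : ∀ y, Fs (Gs y) = y) (hFsmono : StrictMono Fs)
    (hFsmeas : ∀ t, σ (Iic t) = ENNReal.ofReal ((Fs t : ℝ)))
    (k : ℕ) (hk : 0 < k) :
    (∑ j : Fin k, Measure.map (xiMap G Fs hG hFs k hk j) σ) = (k : ℝ≥0∞) • τ := by
  haveI : IsFiniteMeasure (∑ j : Fin k, Measure.map (xiMap G Fs hG hFs k hk j) σ) := by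
    constructor
    rw [Measure.finset_sum_apply]
    have : ∀ j : Fin k, Measure.map (xiMap G Fs hG hFs k hk j) σ univ = 1 := by
      intro j
      haveI : IsProbabilityMeasure (Measure.map (xiMap G Fs hG hFs k hk j) σ) :=
        Measure.isProbabilityMeasure_map (xiMap G Fs hG hFs k hk j).continuous.measurable.aemeasurable
      exact measure_univ
    simp [this]
  apply Measure.ext_of_Iic
  intro a
  rw [Measure.finset_sum_apply]
  have hterm : ∀ j : Fin k, Measure.map (xiMap G Fs hG hFs k hk j) σ (Iic a)
      = ENNReal.ofReal (max 0 (min ((k : ℝ) * ((F a : 𝕀) : ℝ) - (j : ℕ)) 1)) := by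
    intro j
    rw [Measure.map_apply (xiMap G Fs hG hFs k hk j).continuous.measurable measurableSet_Iic,
      xi_preimage_Iic hG hFs hGF hFmono k hk j a,
      measure_sublevel hFsGs hFsmono hFsmeas]
  rw [Finset.sum_congr rfl (fun j _ => hterm j),
    ← ENNReal.ofReal_sum_of_nonneg (fun j _ => le_max_left _ _)]
  have hx0 : (0 : ℝ) ≤ (k : ℝ) * ((F a : 𝕀) : ℝ) :=
    mul_nonneg (Nat.cast_nonneg _) (F a).2.1
  have hx1 : (k : ℝ) * ((F a : 𝕀) : ℝ) ≤ k := by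
    have := (F a).2.2
    nlinarith [Nat.cast_nonneg (α := ℝ) k]
  have hsum : ∑ j : Fin k, max 0 (min ((k : ℝ) * ((F a : 𝕀) : ℝ) - (j : ℕ)) 1)
      = (k : ℝ) * ((F a : 𝕀) : ℝ) := by
    rw [Fin.sum_univ_eq_sum_range (fun j => max 0 (min ((k : ℝ) * ((F a : 𝕀) : ℝ) - (j : ℕ)) 1))]
    exact sum_clamp k _ hx0 hx1
  rw [hsum, Measure.smul_apply, hFmeas a, smul_eq_mul,
    ← ENNReal.ofReal_natCast k, ← ENNReal.ofReal_mul (Nat.cast_nonneg _)]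

lemma key_measure' {τ σ : Measure 𝕀} [IsProbabilityMeasure τ] [IsProbabilityMeasure σ]
    {F G Fs Gs : 𝕀 → 𝕀} (hG : Continuous G) (hFs : Continuous Fs)
    (hGF : ∀ y, F (G y) = y) (hFmono : StrictMono F)
    (hFmeas : ∀ t, τ (Iic t) = ENNReal.ofReal ((F t : ℝ)))
    (hFsGs : ∀ y, Fs (Gs y) = y) (hFsmono : StrictMono Fs)
    (hFsmeas : ∀ t, σ (Iic t) = ENNReal.ofReal ((Fs t : ℝ)))
    (k : ℕ) (hk : 0 < k) :
    (k : ℝ≥0∞)⁻¹ • (∑ j : Fin k, Measure.map (xiMap G Fs hG hFs k hk j) σ) = τ := by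
  rw [key_measure hG hFs hGF hFmono hFmeas hFsGs hFsmono hFsmeas k hk, smul_smul,
    ENNReal.inv_mul_cancel (by exact_mod_cast hk.ne') (ENNReal.natCast_ne_top k), one_smul]

end St6

namespace St6
open Set Filter Topology Function

lemma cover {τ σ : Measure 𝕀} (hτf : Faithful τ) {k : ℕ} (ξ : Fin k → C(𝕀, 𝕀))
    (hmeas : (k : ℝ≥0∞)⁻¹ • ∑ j : Fin k, Measure.map (ξ j) σ = τ) (s : 𝕀) :
    ∃ j t, ξ j t = s := by
  by_contra h
  push_neg at h
  have hK : IsCompact (⋃ j, range (ξ j)) :=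
    isCompact_iUnion fun j => isCompact_range (ξ j).continuous
  have hU : IsOpen (⋃ j, range (ξ j))ᶜ := hK.isClosed.isOpen_compl
  have hs : s ∈ (⋃ j, range (ξ j))ᶜ := by
    simp only [mem_compl_iff, mem_iUnion, mem_range, not_exists]
    intro j t
    exact fun ht => h j t ht
  have hpos := hτf _ hU ⟨s, hs⟩
  have hzero : ∀ j : Fin k, Measure.map (ξ j) σ (⋃ j, range (ξ j))ᶜ = 0 := by
    intro j
    rw [Measure.map_apply (ξ j).continuous.measurable hU.measurableSet]
    have : (ξ j) ⁻¹' (⋃ j, range (ξ j))ᶜ = ∅ := by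
      apply eq_empty_of_forall_notMem
      intro t ht
      exact ht (mem_iUnion.2 ⟨j, mem_range_self t⟩)
    rw [this, measure_empty]
  rw [← hmeas, Measure.smul_apply, Measure.finset_sum_apply,
    Finset.sum_eq_zero (fun j _ => hzero j), smul_zero] at hpos
  exact lt_irrefl 0 hpos

end St6

namespace St6
open Set Filter Topology Function

/-- The reindexing equivalence `Fin n × Fin k ≃ Fin (n*k)`. -/
def eNK (n k : ℕ) : Fin n × Fin k ≃ Fin (n * k) := finProdFinEquiv

lemma diagL_eq (n k : ℕ) (g : Fin k → Mat n) :
    diagL n k (n * k) rfl g =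
      Matrix.reindexAlgEquiv ℂ ℂ (eNK n k) (Matrix.blockDiagonal g) := rfl

lemma trace_submatrix_equiv {l m : Type*} [Fintype l] [Fintype m] (e : l ≃ m)
    (M : Matrix m m ℂ) : (M.submatrix e e).trace = M.trace := by
  simp only [Matrix.trace, Matrix.diag, Matrix.submatrix_apply]
  exact Equiv.sum_comp e fun i => M i i

lemma trace_diagL (n k : ℕ) (g : Fin k → Mat n) :
    (diagL n k (n * k) rfl g).trace = ∑ j : Fin k, (g j).trace := by
  rw [diagL_eq]
  rw [Matrix.reindexAlgEquiv_apply, Matrix.reindex_apply,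
    trace_submatrix_equiv (eNK n k).symm, Matrix.trace_blockDiagonal]

lemma diagL_one (n k : ℕ) : diagL n k (n * k) rfl (fun _ => (1 : Mat n)) = 1 := by
  rw [diagL_eq, show (fun _ : Fin k => (1 : Mat n)) = (1 : Fin k → Mat n) from rfl,
    Matrix.blockDiagonal_one, map_one]

lemma diagL_mul (n k : ℕ) (g h : Fin k → Mat n) :
    diagL n k (n * k) rfl (fun j => g j * h j) =
      diagL n k (n * k) rfl g * diagL n k (n * k) rfl h := by
  rw [diagL_eq, diagL_eq, diagL_eq, ← map_mul, ← Matrix.blockDiagonal_mul]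

lemma diagL_star (n k : ℕ) (g : Fin k → Mat n) :
    diagL n k (n * k) rfl (fun j => star (g j)) = star (diagL n k (n * k) rfl g) := by
  rw [diagL_eq, diagL_eq]
  simp only [Matrix.reindexAlgEquiv_apply, Matrix.reindex_apply,
    Matrix.star_eq_conjTranspose, ← Matrix.blockDiagonal_conjTranspose]
  exact (Matrix.conjTranspose_submatrix _ _ _).symm

def diagHom (n k : ℕ) (ξ : Fin k → C(𝕀, 𝕀)) : 𝔸 n →⋆ₐ[ℂ] 𝔸 (n * k) where
  toFun f := diag n k (n * k) rfl ξ f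
  map_one' := ContinuousMap.ext fun t => by
    show diagL n k (n * k) rfl (fun j => (1 : 𝔸 n) (ξ j t)) = 1
    simp only [ContinuousMap.one_apply]
    exact diagL_one n k
  map_mul' f g := ContinuousMap.ext fun t => by
    show diagL n k (n * k) rfl (fun j => (f * g) (ξ j t)) = _
    simp only [ContinuousMap.mul_apply]
    exact diagL_mul n k _ _
  map_zero' := ContinuousMap.ext fun t => by
    show diagL n k (n * k) rfl (fun j => (0 : 𝔸 n) (ξ j t)) = 0
    simp only [ContinuousMap.zero_apply]
    exact map_zero _
  map_add' f g := ContinuousMap.ext fun t => by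
    show diagL n k (n * k) rfl (fun j => (f + g) (ξ j t)) = _
    simp only [ContinuousMap.add_apply]
    exact map_add (diagL n k (n * k) rfl) _ _
  commutes' c := ContinuousMap.ext fun t => by
    show diagL n k (n * k) rfl (fun j => (algebraMap ℂ (𝔸 n) c) (ξ j t)) = _
    have h1 : ∀ x, (algebraMap ℂ (𝔸 n) c) x = c • (1 : Mat n) := fun x => by
      rw [Algebra.algebraMap_eq_smul_one]; rfl
    have h2 : (algebraMap ℂ (𝔸 (n * k)) c) t = c • (1 : Mat (n * k)) := by
      rw [Algebra.algebraMap_eq_smul_one]; rfl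
    simp only [h1, h2]
    rw [show (fun _ : Fin k => c • (1 : Mat n)) = c • (fun _ : Fin k => (1 : Mat n)) from rfl,
      (diagL n k (n * k) rfl).map_smul, diagL_one]
  map_star' f := ContinuousMap.ext fun t => by
    show diagL n k (n * k) rfl (fun j => (star f) (ξ j t)) = _
    simp only [ContinuousMap.star_apply]
    exact diagL_star n k _

lemma diagHom_apply_entry (n k : ℕ) (ξ : Fin k → C(𝕀, 𝕀)) (f : 𝔸 n) (t : 𝕀)
    (a b : Fin n) (j : Fin k) :
    (diagHom n k ξ f) t (eNK n k (a, j)) (eNK n k (b, j)) = f (ξ j t) a b := by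
  show diagL n k (n * k) rfl (fun j => f (ξ j t)) _ _ = _
  rw [diagL_eq]
  simp [eNK, Matrix.reindexAlgEquiv_apply, Matrix.reindex_apply, Matrix.submatrix_apply,
    Equiv.symm_apply_apply, Matrix.blockDiagonal_apply_eq]

lemma diagHom_injective (n k : ℕ) (ξ : Fin k → C(𝕀, 𝕀))
    (hcover : ∀ s : 𝕀, ∃ j t, ξ j t = s) : Function.Injective (diagHom n k ξ) := by
  intro f g hfg
  apply ContinuousMap.ext
  intro s
  obtain ⟨j, t, rfl⟩ := hcover s
  have h1 : (diagHom n k ξ f) t = (diagHom n k ξ g) t := by rw [hfg]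
  apply Matrix.ext
  intro a b
  have h2 := congrFun (congrFun h1 (eNK n k (a, j))) (eNK n k (b, j))
  rwa [diagHom_apply_entry, diagHom_apply_entry] at h2

lemma integrable_of_continuous {μ' : Measure 𝕀} [IsFiniteMeasure μ'] (h : 𝕀 → ℂ)
    (hc : Continuous h) : Integrable h μ' :=
  hc.integrable_of_hasCompactSupport
    (IsCompact.of_isClosed_subset isCompact_univ (isClosed_tsupport h) (Set.subset_univ _))

lemma trace_continuous (n : ℕ) : Continuous fun M : Mat n => M.trace :=
  (Matrix.traceLinearMap (Fin n) ℂ ℂ).continuous_of_finiteDimensional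

lemma trInt_diag {τ σ : Measure 𝕀} [IsProbabilityMeasure τ] [IsProbabilityMeasure σ]
    (n k : ℕ) (hn : 0 < n) (hk : 0 < k) (ξ : Fin k → C(𝕀, 𝕀))
    (hmeas : (k : ℝ≥0∞)⁻¹ • ∑ j : Fin k, Measure.map (ξ j) σ = τ) (f : 𝔸 n) :
    trInt (n * k) σ (diag n k (n * k) rfl ξ f) = trInt n τ f := by
  have hcontj : ∀ j : Fin k, Continuous fun t => (f (ξ j t)).trace / (n : ℂ) :=
    fun j => ((trace_continuous n).comp (f.continuous.comp (ξ j).continuous)).div_const _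
  have hcont : Continuous fun t : 𝕀 => (f t).trace / (n : ℂ) :=
    ((trace_continuous n).comp f.continuous).div_const _
  have hLHS : trInt (n * k) σ (diag n k (n * k) rfl ξ f)
      = ∑ j : Fin k, ∫ t, (f (ξ j t)).trace / ((n * k : ℕ) : ℂ) ∂σ := by
    rw [trInt]
    have : (fun t => ((diag n k (n * k) rfl ξ f) t).trace / ((n * k : ℕ) : ℂ))
        = fun t => ∑ j : Fin k, (f (ξ j t)).trace / ((n * k : ℕ) : ℂ) := by
      funext t
      rw [show ((diag n k (n * k) rfl ξ f) t)
          = diagL n k (n * k) rfl (fun j => f (ξ j t)) from rfl,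
        trace_diagL n k (fun j => f (ξ j t)), Finset.sum_div]
    rw [this]
    exact integral_finset_sum _ fun j _ => integrable_of_continuous _
      (((trace_continuous n).comp (f.continuous.comp (ξ j).continuous)).div_const _)
  have hterm : ∀ j : Fin k, (∫ t, (f (ξ j t)).trace / ((n * k : ℕ) : ℂ) ∂σ)
      = (k : ℝ)⁻¹ • ∫ t, (f (ξ j t)).trace / (n : ℂ) ∂σ := by
    intro j
    rw [← integral_smul]
    congr 1
    funext t
    rw [Complex.real_smul, Complex.ofReal_inv, Complex.ofReal_natCast, Nat.cast_mul,
      ← div_div, inv_mul_eq_div]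
  have hRHS : trInt n τ f = (k : ℝ)⁻¹ • ∑ j : Fin k,
      ∫ t, (f (ξ j t)).trace / (n : ℂ) ∂σ := by
    rw [trInt, ← hmeas, integral_smul_measure]
    have htoReal : ((k : ℝ≥0∞)⁻¹).toReal = (k : ℝ)⁻¹ := by
      rw [ENNReal.toReal_inv]; simp
    rw [htoReal]
    congr 1
    have hIntMap : ∀ j : Fin k, Integrable (fun t => (f t).trace / (n : ℂ))
        (Measure.map (ξ j) σ) := by
      intro j
      haveI : IsProbabilityMeasure (Measure.map (ξ j) σ) :=
        Measure.isProbabilityMeasure_map (ξ j).continuous.measurable.aemeasurable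
      exact integrable_of_continuous _ hcont
    rw [integral_finset_sum_measure fun j _ => hIntMap j]
    refine Finset.sum_congr rfl fun j _ => ?_
    rw [integral_map (ξ j).continuous.measurable.aemeasurable
      hcont.aestronglyMeasurable]
  rw [hLHS, hRHS, Finset.smul_sum]
  exact Finset.sum_congr rfl fun j _ => hterm j

end St6


/-- The cutting-up lemma: for faithful diffuse measures τ, σ and a
supernatural-number divisor set `D` containing `n`, there is a diagonal morphism
`⟨𝔸 n, τ⟩ → ⟨𝔸 (n*k), σ⟩` whose associated maps have images of diameter less than ε. -/
theorem statement6 (τ σ : Measure 𝕀) [IsProbabilityMeasure τ] [IsProbabilityMeasure σ]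
    [τ.Regular] [σ.Regular] (hτf : Faithful τ) (hτd : Diffuse τ)
    (hσf : Faithful σ) (hσd : Diffuse σ) (n : ℕ) (hn : 1 ≤ n) (ε : ℝ) (hε : 0 < ε)
    (D : Set ℕ) (hDinf : D.Infinite) (hDpos : ∀ d ∈ D, 0 < d)
    (hDdvd : ∀ d ∈ D, ∀ c : ℕ, c ∣ d → c ∈ D)
    (hDlcm : ∀ a ∈ D, ∀ b ∈ D, Nat.lcm a b ∈ D) (hnD : n ∈ D) :
    ∃ k : ℕ, 1 ≤ k ∧ n * k ∈ D ∧ ∃ ξ : Fin k → C(𝕀, 𝕀),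
      (∀ j : Fin k, Metric.diam (Set.range (ξ j)) < ε) ∧
      ((k : ℝ≥0∞)⁻¹ • ∑ j : Fin k, Measure.map (ξ j) σ = τ) ∧
      ∃ Φ : 𝔸 n →⋆ₐ[ℂ] 𝔸 (n * k),
        (∀ f : 𝔸 n, Φ f = diag n k (n * k) rfl ξ f) ∧
        Function.Injective Φ ∧
        ∀ f : 𝔸 n, trInt (n * k) σ (Φ f) = trInt n τ f := by
  classical
  obtain ⟨F, G, hFc, hGc, hFG, hFmono, hFmeas⟩ := St6.exists_cdf (μ := τ) hτf hτd
  obtain ⟨Fs, Gs, hFsc, hGsc, hFsGs, hFsmono, hFsmeas⟩ := St6.exists_cdf (μ := σ) hσf hσd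
  have hGu : UniformContinuous G := CompactSpace.uniformContinuous_of_continuous hGc
  obtain ⟨δ, hδ, hδG⟩ := Metric.uniformContinuous_iff.1 hGu (ε / 2) (half_pos hε)
  obtain ⟨M, hM⟩ := exists_nat_one_div_lt hδ
  obtain ⟨k, hMk, hnkD⟩ := St6.exists_big_k D hDinf hDpos hDlcm hn hnD (M + 1)
  have hk : 0 < k := by omega
  set ξ : Fin k → C(𝕀, 𝕀) := St6.xiMap G Fs hGc hFsc k hk with hξdef
  have hmeas : (k : ℝ≥0∞)⁻¹ • ∑ j : Fin k, Measure.map (ξ j) σ = τ :=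
    St6.key_measure' hGc hFsc hFG hFmono hFmeas hFsGs hFsmono hFsmeas k hk
  refine ⟨k, hk, hnkD, ξ, ?_, hmeas, St6.diagHom n k ξ, fun f => rfl,
    St6.diagHom_injective n k ξ (St6.cover hτf ξ hmeas),
    fun f => St6.trInt_diag n k hn hk ξ hmeas f⟩
  intro j
  have hdiam : Metric.diam (Set.range (ξ j)) ≤ ε / 2 := by
    apply Metric.diam_le_of_forall_dist_le (le_of_lt (half_pos hε))
    rintro x ⟨t, rfl⟩ y ⟨t', rfl⟩
    have hclose : dist (⟨St6.xiAux Fs k j t, St6.xiAux_mem Fs k hk j t⟩ : 𝕀)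
        (⟨St6.xiAux Fs k j t', St6.xiAux_mem Fs k hk j t'⟩ : 𝕀) < δ := by
      rw [Subtype.dist_eq]
      show dist (St6.xiAux Fs k j t) (St6.xiAux Fs k j t') < δ
      rw [Real.dist_eq]
      unfold St6.xiAux
      have h1 : (((j : ℕ) : ℝ) + (Fs t : ℝ)) / k - (((j : ℕ) : ℝ) + (Fs t' : ℝ)) / k
          = ((Fs t : ℝ) - (Fs t' : ℝ)) / k := by ring
      rw [h1, abs_div, abs_of_nonneg (Nat.cast_nonneg k : (0 : ℝ) ≤ k)]
      have h2 : |(Fs t : ℝ) - (Fs t' : ℝ)| ≤ 1 := by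
        rw [abs_le]
        constructor
        · linarith [(Fs t).2.1, (Fs t').2.2]
        · linarith [(Fs t).2.2, (Fs t').2.1]
      have hkM : ((M : ℝ) + 1) ≤ k := by exact_mod_cast Nat.le_of_lt hMk
      have hM1 : (0 : ℝ) < (M : ℝ) + 1 := by positivity
      have hkpos : (0 : ℝ) < k := by exact_mod_cast hk
      calc |(Fs t : ℝ) - (Fs t' : ℝ)| / k ≤ 1 / k := (div_le_div_iff_of_pos_right hkpos).2 h2
        _ ≤ 1 / ((M : ℝ) + 1) := by
              apply one_div_le_one_div_of_le hM1 hkM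
        _ < δ := hM
    exact le_of_lt (hδG hclose)
  exact lt_of_le_of_lt hdiam (half_lt_self hε)
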